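/- Let Q be any set of entailments. For every Q-preantecedent p there exists a saturated Q-preantecedent q with p ⊑_i q (i.e., p can evolve, via a possibly empty sequence of legal input events, to a saturated Q-preantecedent). -/

import Mathlib

/-!
STATEMENT 7: for any set of entailments `Q`, every `Q`-preantecedent evolves
via a (possibly empty) sequence of legal input events to a saturated
`Q`-preantecedent.
-/

namespace Stmt7

/-- Protocols over a set of atoms `At`: atoms, coproducts and products of
finite families (events are represented by positions in the list). -/
inductive Proto (At : Type) : Type where
  | atom : At → Proto At
  | sum : List (Proto At) → Proto At
  | prod : List (Proto At) → Proto At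

/-- The three roles a protocol state may have. -/
inductive Role : Type where
  | src  -- source role 0
  | snk  -- sink role 1
  | flow -- flow role +
deriving DecidableEq

/-- Interchanging the source and sink roles. -/
def Role.swap : Role → Role
  | .src => .snk
  | .snk => .src
  | .flow => .flow

/-- The role of a coproduct state, from the roles of its components. -/
def sumRole (rs : List Role) : Role :=
  if ∀ r ∈ rs, r = Role.src then .src
  else if rs.count Role.snk = 1 ∧ rs.count Role.flow = 0 then .snk
  else .flow

/-- The role of a product state, from the roles of its components. -/
def prodRole (rs : List Role) : Role :=
  if ∀ r ∈ rs, r = Role.snk then .snk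
  else if rs.count Role.src = 1 ∧ rs.count Role.flow = 0 then .src
  else .flow

mutual
/-- The role of a protocol state on a domain channel. -/
def roleD {At : Type} : Proto At → Role
  | .atom _ => .flow
  | .sum Xs => sumRole (rolesD Xs)
  | .prod Xs => prodRole (rolesD Xs)

def rolesD {At : Type} : List (Proto At) → List Role
  | [] => []
  | X :: Xs => roleD X :: rolesD Xs
end

/-- A channel is either a domain channel or a codomain channel. -/
inductive Side : Type where
  | dom
  | cod
deriving DecidableEq

/-- The role of a protocol state on a channel of the given side (codomain
roles are computed dually). -/
def role {At : Type} : Side → Proto At → Role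
  | .dom, X => roleD X
  | .cod, X => (roleD X).swap

/-- Directions of events: input or output. -/
inductive Dir : Type where
  | inp
  | out
deriving DecidableEq

def Dir.flip : Dir → Dir
  | .inp => .out
  | .out => .inp

/-- An event: a direction together with the position of the selected
component. -/
abbrev Ev : Type := Dir × ℕ

/-- The subprotocol reached by a transition along event `i`. -/
def Proto.next {At : Type} : Proto At → ℕ → Option (Proto At)
  | .atom _, _ => none
  | .sum Xs, i => Xs[i]?
  | .prod Xs, i => Xs[i]?

/-- The direction of events a protocol state expects, on a channel of the
given side (coproducts expect inputs on domain channels and outputs on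
codomain channels; products dually). -/
def expects {At : Type} (s : Side) : Proto At → Option Dir
  | .sum _ => some (match s with | .dom => .inp | .cod => .out)
  | .prod _ => some (match s with | .dom => .out | .cod => .inp)
  | .atom _ => none

/-- A legal transition of a protocol state on a channel of side `s`: it starts
at a state with flow role, has the direction the state expects, and an output
transition does not end at a sink-role state while an input transition does
not end at a source-role state. -/
def StepP {At : Type} (s : Side) (P : Proto At) (e : Ev) (P' : Proto At) : Prop :=
  role s P = .flow ∧ expects s P = some e.1 ∧ P.next e.2 = some P' ∧
    (e.1 = Dir.out → role s P' ≠ .snk) ∧ (e.1 = Dir.inp → role s P' ≠ .src)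

/-- A legal channel behaviour: a finite sequence of legal transitions,
reaching the indicated state. -/
inductive StepsP {At : Type} (s : Side) : Proto At → List Ev → Proto At → Prop where
  | nil (P : Proto At) : StepsP s P [] P
  | cons {P P' P'' : Proto At} {e : Ev} {l : List Ev} :
      StepP s P e P' → StepsP s P' l P'' → StepsP s P (e :: l) P''

def Proto.IsAtom {At : Type} : Proto At → Prop
  | .atom _ => True
  | _ => False

/-- A finite family of channels, each assigned a protocol and partitioned
into domain channels and codomain channels. -/
structure Setting (At Chan : Type) where
  active : Set Chan
  finite : active.Finite
  side : Chan → Side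
  proto : Chan → Proto At

/-- A behaviour: a tuple of channel behaviours, one per channel. -/
abbrev Behav (Chan : Type) : Type := Chan → List Ev

variable {At Chan M : Type}

/-- The behaviour `p` reaches the frontier state `P` on channel `c`. -/
def Setting.Reaches (S : Setting At Chan) (p : Behav Chan) (c : Chan) (P : Proto At) : Prop :=
  StepsP (S.side c) (S.proto c) (p c) P

/-- `p` is a legal behaviour for the setting `S`. -/
def Setting.IsBehav (S : Setting At Chan) (p : Behav Chan) : Prop :=
  (∀ c ∉ S.active, p c = []) ∧ ∀ c ∈ S.active, ∃ P, S.Reaches p c P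

/-- An antecedent behaviour: every frontier state has flow or sink role. -/
def Setting.Antecedent (S : Setting At Chan) (p : Behav Chan) : Prop :=
  S.IsBehav p ∧ ∀ c ∈ S.active, ∀ P, S.Reaches p c P → role (S.side c) P ≠ .src

/-- A saturated behaviour: every frontier state is atomic, has sink role,
or is an output state with flow role. -/
def Setting.Saturated (S : Setting At Chan) (p : Behav Chan) : Prop :=
  S.IsBehav p ∧ ∀ c ∈ S.active, ∀ P, S.Reaches p c P →
    P.IsAtom ∨ role (S.side c) P = .snk ∨
      (expects (S.side c) P = some Dir.out ∧ role (S.side c) P = .flow)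

/-- `p ⊑ q`: componentwise prefix of behaviours. -/
def BPrefix (p q : Behav Chan) : Prop := ∀ c, p c <+: q c

/-- `p ⊑_i q`: `p` is a prefix of `q` and all intervening events are inputs. -/
def BPrefixI (p q : Behav Chan) : Prop :=
  ∀ c, ∃ r : List Ev, q c = p c ++ r ∧ ∀ e ∈ r, e.1 = Dir.inp

/-- Compatibility `p ⌣ q` of behaviours. -/
def Compat (p q : Behav Chan) : Prop := ∀ c, p c <+: q c ∨ q c <+: p c

/-- The join `p ⊔ q` of (compatible) behaviours: the longer component on each
channel. -/
def bjoin (p q : Behav Chan) : Behav Chan :=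
  fun c => if (p c).length ≤ (q c).length then q c else p c

/-- The empty behaviour. -/
def emptyB : Behav Chan := fun _ => []

/-- `p * e` on channel `c`: append the event `e` at the end of the channel
behaviour of `c`. -/
def bapp [DecidableEq Chan] (p : Behav Chan) (c : Chan) (e : Ev) : Behav Chan :=
  Function.update p c (p c ++ [e])

/-- `e * p` on channel `c`: prepend the event `e` at the beginning of the
channel behaviour of `c`. -/
def bpre [DecidableEq Chan] (c : Chan) (e : Ev) (p : Behav Chan) : Behav Chan :=
  Function.update p c (e :: p c)

/-- The conclusion of an entailment: an output event `ᾱ[a]` or an atomic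
morphism. -/
inductive Concl (Chan M : Type) : Type where
  | out : Chan → ℕ → Concl Chan M
  | mor : M → Concl Chan M

/-- An entailment: an antecedent behaviour together with a conclusion. -/
abbrev Ent (Chan M : Type) : Type := Behav Chan × Concl Chan M

/-- The event `e` is a legal next event on channel `c` given the behaviour
`p`. -/
def Setting.CanStep (S : Setting At Chan) (p : Behav Chan) (c : Chan) (e : Ev) : Prop :=
  ∃ P P', S.Reaches p c P ∧ StepP (S.side c) P e P'

/-- Validity of an entailment: the antecedent is an antecedent behaviour and
the conclusion is a legal output event, resp. an atomic morphism on the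
(all-atomic) frontier. -/
def Setting.ValidEnt (S : Setting At Chan) : Ent Chan M → Prop
  | (p, .out α a) => S.Antecedent p ∧ α ∈ S.active ∧ S.CanStep p α (Dir.out, a)
  | (p, .mor _) => S.Antecedent p ∧ ∀ c ∈ S.active, ∃ A, S.Reaches p c (.atom A)

/-- A set of entailments. -/
def EntSet (S : Setting At Chan) (Q : Set (Ent Chan M)) : Prop :=
  ∀ e ∈ Q, S.ValidEnt e

/-- All output events occurring in `p` are `Q`-justified. -/
def Justified [DecidableEq Chan] (S : Setting At Chan) (Q : Set (Ent Chan M))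
    (p : Behav Chan) : Prop :=
  ∀ c ∈ S.active, ∀ (l : List Ev) (a : ℕ) (r : List Ev), p c = l ++ (Dir.out, a) :: r →
    ∃ u : Behav Chan, (u, Concl.out c a) ∈ Q ∧ u c = l ∧ BPrefix (bapp u c (Dir.out, a)) p

/-- A `Q`-preantecedent: a `Q`-justified antecedent behaviour. -/
def Preant [DecidableEq Chan] (S : Setting At Chan) (Q : Set (Ent Chan M))
    (p : Behav Chan) : Prop :=
  S.Antecedent p ∧ Justified S Q p

/-- A `Q`-antecedent: the antecedent of some entailment of `Q`. -/
def QAnt (Q : Set (Ent Chan M)) (p : Behav Chan) : Prop := ∃ x, (p, x) ∈ Q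

section EP

variable [DecidableEq Chan]

/-- EP-1: every `Q`-antecedent is `Q`-justified. -/
def EP1 (S : Setting At Chan) (Q : Set (Ent Chan M)) : Prop :=
  ∀ p, QAnt Q p → Justified S Q p

/-- EP-2: compatible entailments with equal channel behaviour on the output
channel conclude the same output event. -/
def EP2 (Q : Set (Ent Chan M)) : Prop :=
  ∀ (p q : Behav Chan) (α : Chan) (a b : ℕ),
    (p, Concl.out α a) ∈ Q → (q, Concl.out α b) ∈ Q → p α = q α → Compat p q → a = b

/-- EP-3: between a preantecedent and a saturated preantecedent above it along
inputs there is a `Q`-antecedent. -/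
def EP3 (S : Setting At Chan) (Q : Set (Ent Chan M)) : Prop :=
  ∀ p q, Preant S Q p → Preant S Q q → S.Saturated q → BPrefixI p q →
    ∃ p', QAnt Q p' ∧ BPrefixI p p' ∧ BPrefixI p' q

/-- EP-4. -/
def EP4 (Q : Set (Ent Chan M)) : Prop :=
  ∀ (α β : Chan) (a b : ℕ) (p q : Behav Chan), α ≠ β →
    (p, Concl.out α a) ∈ Q → (q, Concl.out β b) ∈ Q → p α = q α → BPrefix p q →
    (bapp q α (Dir.out, a), Concl.out β b) ∈ Q

/-- EP-5. -/
def EP5 (S : Setting At Chan) (Q : Set (Ent Chan M)) : Prop :=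
  ∀ (α β : Chan) (a b : ℕ) (p : Behav Chan), α ≠ β →
    (p, Concl.out α a) ∈ Q → β ∈ S.active → S.CanStep p β (Dir.inp, b) →
    (bapp p β (Dir.inp, b), Concl.out α a) ∈ Q

/-- EP-6. -/
def EP6 (Q : Set (Ent Chan M)) : Prop :=
  ∀ (α β : Chan) (a b : ℕ) (p : Behav Chan), α ≠ β →
    (bapp p β (Dir.out, b), Concl.out α a) ∈ Q → (p, Concl.out α a) ∈ Q

/-- EP-7. -/
def EP7 (S : Setting At Chan) (Q : Set (Ent Chan M)) : Prop :=
  ∀ (α β : Chan) (a : ℕ) (p : Behav Chan), α ≠ β → Preant S Q p → β ∈ S.active →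
    (∃ b, S.CanStep p β (Dir.inp, b)) →
    (∀ b, S.CanStep p β (Dir.inp, b) → (bapp p β (Dir.inp, b), Concl.out α a) ∈ Q) →
    (p, Concl.out α a) ∈ Q

/-- A proto-process: a set of entailments satisfying EP-1, EP-2 and EP-3. -/
def ProtoProcess (S : Setting At Chan) (Q : Set (Ent Chan M)) : Prop :=
  EntSet S Q ∧ EP1 S Q ∧ EP2 Q ∧ EP3 S Q

/-- An extensional process: a set of entailments satisfying EP-1 – EP-7. -/
def ExtProcess (S : Setting At Chan) (Q : Set (Ent Chan M)) : Prop :=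
  ProtoProcess S Q ∧ EP4 Q ∧ EP5 S Q ∧ EP6 Q ∧ EP7 S Q

end EP


/-! Auxiliary lemmas for Statement 7. -/

section Aux
variable {At Chan M : Type}

lemma stepP_det {s : Side} {P P₁ P₂ : Proto At} {e : Ev}
    (h₁ : StepP s P e P₁) (h₂ : StepP s P e P₂) : P₁ = P₂ := by
  have := h₁.2.2.1; have := h₂.2.2.1
  simp_all

lemma stepsP_det {s : Side} {P : Proto At} {l : List Ev} {P₁ P₂ : Proto At}
    (h₁ : StepsP s P l P₁) (h₂ : StepsP s P l P₂) : P₁ = P₂ := by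
  induction h₁ generalizing P₂ with
  | nil => cases h₂; rfl
  | cons hs _ ih =>
    cases h₂ with
    | cons hs' ht' => exact ih (stepP_det hs hs' ▸ ht')

lemma stepsP_snoc {s : Side} {P P' P'' : Proto At} {l : List Ev} {e : Ev}
    (h : StepsP s P l P') (h' : StepP s P' e P'') : StepsP s P (l ++ [e]) P'' := by
  induction h with
  | nil => exact .cons h' (.nil _)
  | cons hs _ ih => exact .cons hs (ih h')

lemma rolesD_eq (Xs : List (Proto At)) : rolesD Xs = Xs.map roleD := by
  induction Xs with
  | nil => rfl
  | cons X Xs ih => simp [rolesD, ih]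

lemma role_swap_ne_src {r : Role} (h : r ≠ Role.snk) : r.swap ≠ Role.src := by
  cases r <;> simp_all [Role.swap]

lemma exists_input_step {s : Side} {P : Proto At}
    (hf : role s P = .flow) (he : expects s P = some Dir.inp) :
    ∃ b P', StepP s P (Dir.inp, b) P' := by
  cases s with
  | dom =>
    cases P with
    | atom a => simp [expects] at he
    | prod Xs => simp [expects] at he
    | sum Xs =>
      have hx : ∃ X ∈ Xs, roleD X ≠ Role.src := by
        by_contra hc
        push_neg at hc
        have : ∀ r ∈ rolesD Xs, r = Role.src := by
          rw [rolesD_eq]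
          intro r hr
          obtain ⟨X, hX, rfl⟩ := List.mem_map.1 hr
          exact hc X hX
        rw [role, roleD, sumRole, if_pos this] at hf
        exact absurd hf (by decide)
      obtain ⟨X, hX, hr⟩ := hx
      obtain ⟨b, hb⟩ := List.getElem?_of_mem hX
      exact ⟨b, X, hf, he, hb, by simp, fun _ => hr⟩
  | cod =>
    cases P with
    | atom a => simp [expects] at he
    | sum Xs => simp [expects] at he
    | prod Xs =>
      have hx : ∃ X ∈ Xs, roleD X ≠ Role.snk := by
        by_contra hc
        push_neg at hc
        have : ∀ r ∈ rolesD Xs, r = Role.snk := by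
          rw [rolesD_eq]
          intro r hr
          obtain ⟨X, hX, rfl⟩ := List.mem_map.1 hr
          exact hc X hX
        rw [role] at hf
        rw [show roleD (Proto.prod Xs) = prodRole (rolesD Xs) from rfl, prodRole, if_pos this] at hf
        exact absurd hf (by decide)
      obtain ⟨X, hX, hr⟩ := hx
      obtain ⟨b, hb⟩ := List.getElem?_of_mem hX
      exact ⟨b, X, hf, he, hb, by simp, fun _ => role_swap_ne_src hr⟩

lemma next_sizeOf {P P' : Proto At} {b : ℕ} (h : P.next b = some P') :
    sizeOf P' < sizeOf P := by
  cases P with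
  | atom a => simp [Proto.next] at h
  | sum Xs =>
    have hm : P' ∈ Xs := List.mem_of_getElem? h
    have := List.sizeOf_lt_of_mem hm
    simp only [Proto.sum.sizeOf_spec]
    omega
  | prod Xs =>
    have hm : P' ∈ Xs := List.mem_of_getElem? h
    have := List.sizeOf_lt_of_mem hm
    simp only [Proto.prod.sizeOf_spec]
    omega

open Classical in
noncomputable def fsize (S : Setting At Chan) (c : Chan) (l : List Ev) : ℕ :=
  if h : ∃ P, StepsP (S.side c) (S.proto c) l P then sizeOf h.choose else 0

lemma fsize_eq {S : Setting At Chan} {c : Chan} {l : List Ev} {P : Proto At}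
    (h : StepsP (S.side c) (S.proto c) l P) : fsize S c l = sizeOf P := by
  have hex : ∃ P, StepsP (S.side c) (S.proto c) l P := ⟨P, h⟩
  classical
  simp only [fsize]
  rw [dif_pos hex, stepsP_det hex.choose_spec h]

noncomputable def measureB (S : Setting At Chan) (p : Behav Chan) : ℕ :=
  ∑ c ∈ S.finite.toFinset, fsize S c (p c)

lemma bprefixI_refl (p : Behav Chan) : BPrefixI p p :=
  fun c => ⟨[], by simp, by simp⟩

lemma bprefixI_trans {p q r : Behav Chan} (h₁ : BPrefixI p q) (h₂ : BPrefixI q r) :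
    BPrefixI p r := by
  intro c
  obtain ⟨u, hu, hui⟩ := h₁ c
  obtain ⟨v, hv, hvi⟩ := h₂ c
  exact ⟨u ++ v, by simp [hv, hu], by
    intro e he; rcases List.mem_append.1 he with h | h
    · exact hui e h
    · exact hvi e h⟩

lemma snoc_eq_append_cons {xs l r : List Ev} {y z : Ev}
    (h : xs ++ [y] = l ++ z :: r) :
    (r = [] ∧ z = y ∧ l = xs) ∨ ∃ r', r = r' ++ [y] ∧ xs = l ++ z :: r' := by
  rcases List.eq_nil_or_concat r with rfl | ⟨r', b, rfl⟩
  · have := List.append_inj' h rfl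
    simp_all
  · rw [List.concat_eq_append, ← List.cons_append, ← List.append_assoc] at h
    have := List.append_inj' h rfl
    obtain ⟨h1, h2⟩ := this
    simp at h2
    exact Or.inr ⟨r', by simp [h2], h1⟩

end Aux

lemma step_lemma {At Chan M : Type} [DecidableEq Chan]
    (S : Setting At Chan) (Q : Set (Ent Chan M)) {p : Behav Chan}
    (hp : Preant S Q p) (hns : ¬ S.Saturated p) :
    ∃ q0, Preant S Q q0 ∧ BPrefixI p q0 ∧ measureB S q0 < measureB S p := by
  obtain ⟨⟨hbeh, hant⟩, hjust⟩ := hp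
  have hnb : ¬ ∀ c ∈ S.active, ∀ P, S.Reaches p c P →
      P.IsAtom ∨ role (S.side c) P = .snk ∨
        (expects (S.side c) P = some Dir.out ∧ role (S.side c) P = .flow) :=
    fun h => hns ⟨hbeh, h⟩
  push_neg at hnb
  obtain ⟨c, hc, P, hP, hnatom, hnsnk, hnout⟩ := hnb
  have hrole : role (S.side c) P = .flow := by
    have h1 := hant c hc P hP
    cases h : role (S.side c) P
    · exact absurd h h1
    · exact absurd h hnsnk
    · rfl
  have hexp : expects (S.side c) P = some Dir.inp := by
    rcases hs : S.side c with _ | _ <;> cases P <;>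
      simp_all [expects, Proto.IsAtom]
  obtain ⟨b, P', hstep⟩ := exists_input_step hrole hexp
  set q0 := bapp p c (Dir.inp, b) with hq0
  have hq0c : q0 c = p c ++ [(Dir.inp, b)] := Function.update_self _ _ _
  have hq0ne : ∀ c' , c' ≠ c → q0 c' = p c' := fun c' h => Function.update_of_ne h _ _
  have hreach' : S.Reaches q0 c P' := by
    show StepsP _ _ (q0 c) _
    rw [hq0c]
    exact stepsP_snoc hP hstep
  have hpq : BPrefix p q0 := by
    intro c''
    by_cases h : c'' = c
    · subst h; rw [hq0c]; exact ⟨[(Dir.inp, b)], rfl⟩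
    · rw [hq0ne c'' h]
  have hbeh' : S.IsBehav q0 := by
    constructor
    · intro c' hc'
      have hne : c' ≠ c := fun h => hc' (h ▸ hc)
      rw [hq0ne c' hne]; exact hbeh.1 c' hc'
    · intro c' hc'
      by_cases h : c' = c
      · subst h; exact ⟨P', hreach'⟩
      · obtain ⟨P'', hP''⟩ := hbeh.2 c' hc'
        exact ⟨P'', by show StepsP _ _ (q0 c') _; rw [hq0ne c' h]; exact hP''⟩
  refine ⟨q0, ⟨⟨hbeh', ?_⟩, ?_⟩, ?_, ?_⟩
  · intro c' hc' P'' hr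
    by_cases h : c' = c
    · subst h
      have : P'' = P' := stepsP_det hr hreach'
      subst this
      exact hstep.2.2.2.2 rfl
    · have hr' : S.Reaches p c' P'' := by
        show StepsP _ _ (p c') _; rw [← hq0ne c' h]; exact hr
      exact hant c' hc' P'' hr'
  · intro c' hc' l a r hdec
    by_cases h : c' = c
    · subst h
      rw [hq0c] at hdec
      rcases snoc_eq_append_cons hdec with ⟨_, hz, _⟩ | ⟨r', _, hxs⟩
      · simp at hz
      · obtain ⟨u, huQ, huc, hupre⟩ := hjust c' hc l a r' hxs
        exact ⟨u, huQ, huc, fun c'' => (hupre c'').trans (hpq c'')⟩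
    · rw [hq0ne c' h] at hdec
      obtain ⟨u, huQ, huc, hupre⟩ := hjust c' hc' l a r hdec
      exact ⟨u, huQ, huc, fun c'' => (hupre c'').trans (hpq c'')⟩
  · intro c'
    by_cases h : c' = c
    · subst h; exact ⟨[(Dir.inp, b)], hq0c, by simp⟩
    · exact ⟨[], by simp [hq0ne c' h], by simp⟩
  · apply Finset.sum_lt_sum
    · intro i _
      by_cases h : i = c
      · subst h
        rw [hq0c, fsize_eq (stepsP_snoc hP hstep), fsize_eq hP]
        exact le_of_lt (next_sizeOf hstep.2.2.1)
      · rw [hq0ne i h]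
    · exact ⟨c, S.finite.mem_toFinset.2 hc, by
        rw [hq0c, fsize_eq (stepsP_snoc hP hstep), fsize_eq hP]
        exact next_sizeOf hstep.2.2.1⟩

theorem preant_evolves_to_saturated {At Chan M : Type} [DecidableEq Chan]
    (S : Setting At Chan) (Q : Set (Ent Chan M)) :
    ∀ p, Preant S Q p → ∃ q, Preant S Q q ∧ S.Saturated q ∧ BPrefixI p q := by
  have main : ∀ n p, Preant S Q p → measureB S p ≤ n →
      ∃ q, Preant S Q q ∧ S.Saturated q ∧ BPrefixI p q := by
    intro n
    induction n with
    | zero =>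
      intro p hp hm
      by_cases hs : S.Saturated p
      · exact ⟨p, hp, hs, bprefixI_refl p⟩
      · obtain ⟨q0, _, _, hlt⟩ := step_lemma S Q hp hs
        omega
    | succ n ih =>
      intro p hp hm
      by_cases hs : S.Saturated p
      · exact ⟨p, hp, hs, bprefixI_refl p⟩
      · obtain ⟨q0, hq0, hpre, hlt⟩ := step_lemma S Q hp hs
        obtain ⟨q, hq, hqs, hqpre⟩ := ih q0 hq0 (by omega)
        exact ⟨q, hq, hqs, bprefixI_trans hpre hqpre⟩
  exact fun p hp => main (measureB S p) p hp le_rfl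


end Stmt7
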